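/- arXiv:0903.0581 — 2 statements merged into one kernel-verified Lean document; each statement's English description precedes it below -/
import Mathlib

section
/- Let R be a commutative ring, let y be an element and X a nonempty finite set not containing y, and let S be any function assigning to each nonempty finite subset of {y} ∪ X an element of R. For a nonempty finite set T, define the cumulant 𝔄(T) = Σ_P (−1)^{|P|−1} (|P|−1)! ∏_{B∈P} S(B), where the sum runs over all partitions P of T into nonempty pairwise disjoint blocks B. Then 𝔄({y} ∪ X) = Σ_{∅≠Z⊆X} ( S({y} ∪ Z) − S({y})·S(Z) ) · Σ_Q (−1)^{|Q|} |Q|! ∏_{B∈Q} S(B), where the inner sum runs over all partitions Q of X \ Z into nonempty pairwise disjoint blocks (with the convention that when Z = X the inner sum equals 1, the value for the empty partition). -/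
open Finset

/-- The finset of all partitions of a finite set `T` into nonempty pairwise
disjoint blocks, represented as finsets of blocks. -/
def partitionsOf {α : Type*} [DecidableEq α] (T : Finset α) : Finset (Finset (Finset α)) :=
  T.powerset.powerset.filter
    (fun P => (∀ B ∈ P, B ≠ ∅) ∧ (∀ B ∈ P, ∀ B' ∈ P, B ≠ B' → ∀ a ∈ B, a ∉ B') ∧
      P.sup id = T)

/-- The cumulant `𝔄(T) = Σ_P (−1)^{|P|−1} (|P|−1)! ∏_{B∈P} S(B)` of a set function `S`,
the sum running over all partitions `P` of `T` into nonempty pairwise disjoint blocks. -/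
noncomputable def cumulant {α R : Type*} [DecidableEq α] [CommRing R]
    (S : Finset α → R) (T : Finset α) : R :=
  ∑ P ∈ partitionsOf T, (-1 : R) ^ (P.card - 1) * (Nat.factorial (P.card - 1) : R) * ∏ B ∈ P, S B

section Aux

variable {α : Type*} [DecidableEq α]

theorem mem_partitionsOf' {T : Finset α} {P : Finset (Finset α)} :
    P ∈ partitionsOf T ↔ (∀ B ∈ P, B ≠ ∅) ∧
      (∀ B ∈ P, ∀ B' ∈ P, B ≠ B' → ∀ a ∈ B, a ∉ B') ∧ P.sup id = T := by
  simp only [partitionsOf, mem_filter, mem_powerset]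
  constructor
  · exact fun h => h.2
  · intro h
    refine ⟨fun B hB => ?_, h⟩
    rw [mem_powerset]
    exact h.2.2 ▸ le_sup (f := id) hB

theorem block_subset {T : Finset α} {P : Finset (Finset α)} {B : Finset α}
    (hP : P ∈ partitionsOf T) (hB : B ∈ P) : B ⊆ T :=
  (mem_partitionsOf'.1 hP).2.2 ▸ le_sup (f := id) hB

theorem exists_block {T : Finset α} {P : Finset (Finset α)} (hP : P ∈ partitionsOf T)
    {a : α} (ha : a ∈ T) : ∃ B ∈ P, a ∈ B := by
  have h := (mem_partitionsOf'.1 hP).2.2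
  rw [← h] at ha
  simpa using mem_sup.1 ha

theorem insert_block {Z U : Finset α} (hZ : Z ≠ ∅) (hd : ∀ a ∈ Z, a ∉ U)
    {Q : Finset (Finset α)} (hQ : Q ∈ partitionsOf U) :
    insert Z Q ∈ partitionsOf (Z ∪ U) := by
  obtain ⟨h1, h2, h3⟩ := mem_partitionsOf'.1 hQ
  refine mem_partitionsOf'.2 ⟨?_, ?_, ?_⟩
  · intro B hB
    rcases mem_insert.1 hB with rfl | hB
    · exact hZ
    · exact h1 B hB
  · intro B hB B' hB' hne a haB haB'
    rcases mem_insert.1 hB with hBZ | hBQ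
    · rcases mem_insert.1 hB' with hB'Z | hB'Q
      · exact hne (hBZ.trans hB'Z.symm)
      · exact hd a (hBZ ▸ haB) (block_subset hQ hB'Q haB')
    · rcases mem_insert.1 hB' with hB'Z | hB'Q
      · exact hd a (hB'Z ▸ haB') (block_subset hQ hBQ haB)
      · exact h2 B hBQ B' hB'Q hne a haB haB'
  · rw [sup_insert, h3]
    simp [sup_eq_union]

theorem not_mem_of_block {Z U : Finset α} (hZ : Z ≠ ∅) (hd : ∀ a ∈ Z, a ∉ U)
    {Q : Finset (Finset α)} (hQ : Q ∈ partitionsOf U) : Z ∉ Q := by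
  intro hmem
  obtain ⟨a, ha⟩ := nonempty_iff_ne_empty.2 hZ
  exact hd a ha (block_subset hQ hmem ha)

theorem erase_block {T : Finset α} {P : Finset (Finset α)} (hP : P ∈ partitionsOf T)
    {B : Finset α} (hB : B ∈ P) : P.erase B ∈ partitionsOf (T \ B) := by
  obtain ⟨h1, h2, h3⟩ := mem_partitionsOf'.1 hP
  refine mem_partitionsOf'.2 ⟨fun B' hB' => h1 B' (mem_of_mem_erase hB'),
    fun B1 hB1 B2 hB2 hne a ha => h2 B1 (mem_of_mem_erase hB1) B2 (mem_of_mem_erase hB2) hne a ha,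
    ?_⟩
  ext a
  simp only [mem_sup, id_eq, mem_sdiff]
  constructor
  · rintro ⟨B', hB', haB'⟩
    have hB'P := mem_of_mem_erase hB'
    exact ⟨block_subset hP hB'P haB',
      fun haB => h2 B' hB'P B hB (ne_of_mem_erase hB') a haB' haB⟩
  · rintro ⟨haT, haB⟩
    obtain ⟨B', hB', haB'⟩ := exists_block hP haT
    exact ⟨B', mem_erase.2 ⟨fun h => haB (h ▸ haB'), hB'⟩, haB'⟩

/-- The block of the partition `P` containing `a`. -/
def blockW (a : α) (P : Finset (Finset α)) : Finset α :=
  (P.filter (fun B => a ∈ B)).sup id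

theorem blockW_eq {T : Finset α} {P : Finset (Finset α)} (hP : P ∈ partitionsOf T)
    {a : α} {B : Finset α} (hB : B ∈ P) (haB : a ∈ B) : blockW a P = B := by
  have hf : P.filter (fun B' => a ∈ B') = {B} := by
    ext B'
    simp only [mem_filter, mem_singleton]
    constructor
    · rintro ⟨hB', haB'⟩
      by_contra hne
      exact (mem_partitionsOf'.1 hP).2.1 B' hB' B hB hne a haB' haB
    · rintro rfl
      exact ⟨hB, haB⟩
  rw [blockW, hf, sup_singleton]
  rfl

theorem blockW_mem {T : Finset α} {P : Finset (Finset α)} (hP : P ∈ partitionsOf T)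
    {a : α} (ha : a ∈ T) : blockW a P ∈ P ∧ a ∈ blockW a P := by
  obtain ⟨B, hB, haB⟩ := exists_block hP ha
  rw [blockW_eq hP hB haB]
  exact ⟨hB, haB⟩

theorem sum_partitions_insert {R : Type*} [CommRing R] (y : α) (T : Finset α) (hy : y ∉ T)
    (w : ℕ → R) (f : Finset α → R) :
    ∑ P ∈ partitionsOf (insert y T), w P.card * ∏ B ∈ P, f B
    = ∑ Z ∈ T.powerset, f (insert y Z) *
        ∑ Q ∈ partitionsOf (T \ Z), w (Q.card + 1) * ∏ B ∈ Q, f B := by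
  have hstep : ∀ Z ∈ T.powerset, f (insert y Z) *
      ∑ Q ∈ partitionsOf (T \ Z), w (Q.card + 1) * ∏ B ∈ Q, f B
      = ∑ Q ∈ partitionsOf (T \ Z), f (insert y Z) * (w (Q.card + 1) * ∏ B ∈ Q, f B) :=
    fun Z _ => mul_sum _ _ _
  rw [sum_congr rfl hstep, sum_sigma']
  have hins : ∀ p : Σ _ : Finset α, Finset (Finset α),
      p ∈ T.powerset.sigma (fun Z => partitionsOf (T \ Z)) →
      insert (insert y p.1) p.2 ∈ partitionsOf (insert y T) ∧ insert y p.1 ∉ p.2 := by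
    intro p hp
    rw [mem_sigma, mem_powerset] at hp
    obtain ⟨hZT, hQ⟩ := hp
    have hne : insert y p.1 ≠ ∅ := (insert_nonempty _ _).ne_empty
    have hd : ∀ a ∈ insert y p.1, a ∉ T \ p.1 := by
      intro a ha
      rcases mem_insert.1 ha with rfl | ha
      · exact fun h => hy (mem_sdiff.1 h).1
      · exact fun h => (mem_sdiff.1 h).2 ha
    have h := insert_block hne hd hQ
    rw [insert_union, union_sdiff_of_subset hZT] at h
    exact ⟨h, not_mem_of_block hne hd hQ⟩
  refine Finset.sum_bij' (fun P _ => (⟨(blockW y P).erase y, P.erase (blockW y P)⟩ :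
      Σ _ : Finset α, Finset (Finset α)))
    (fun p _ => insert (insert y p.1) p.2) ?_ (fun p hp => (hins p hp).1) ?_ ?_ ?_
  · intro P hP
    have hBy := blockW_mem hP (mem_insert_self y T)
    rw [mem_sigma, mem_powerset]
    constructor
    · intro a ha
      obtain ⟨hay, haB⟩ := mem_erase.1 ha
      rcases mem_insert.1 (block_subset hP hBy.1 haB) with rfl | h
      · exact absurd rfl hay
      · exact h
    · have hsd : (insert y T) \ (blockW y P) = T \ ((blockW y P).erase y) := by
        ext a
        simp only [mem_sdiff, mem_insert, mem_erase, not_and]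
        constructor
        · rintro ⟨rfl | h1, h2⟩
          · exact absurd hBy.2 h2
          · exact ⟨h1, fun _ hB => h2 hB⟩
        · rintro ⟨h1, h2⟩
          exact ⟨Or.inr h1, fun hB => h2 (fun he => hy (he ▸ h1)) hB⟩
      have h := erase_block hP hBy.1
      rwa [hsd] at h
  · intro P hP
    have hBy := blockW_mem hP (mem_insert_self y T)
    dsimp only
    rw [insert_erase hBy.2, insert_erase hBy.1]
  · intro p hp
    obtain ⟨hPmem, hnotmem⟩ := hins p hp
    rw [mem_sigma, mem_powerset] at hp
    have hyp1 : y ∉ p.1 := fun h => hy (hp.1 h)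
    have hbw : blockW y (insert (insert y p.1) p.2) = insert y p.1 :=
      blockW_eq hPmem (mem_insert_self _ _) (mem_insert_self y p.1)
    rw [hbw, Finset.erase_insert hyp1, Finset.erase_insert hnotmem]
  · intro P hP
    have hBy := blockW_mem hP (mem_insert_self y T)
    dsimp only
    rw [insert_erase hBy.2, card_erase_add_one hBy.1, ← Finset.mul_prod_erase P f hBy.1]
    ring

theorem sum_partitions_marked {R : Type*} [CommRing R] (X : Finset α)
    (w : ℕ → R) (f : Finset α → R) :
    ∑ P ∈ partitionsOf X, (P.card : R) * (w P.card * ∏ B ∈ P, f B)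
    = ∑ Z ∈ X.powerset.filter (fun Z => Z ≠ ∅), f Z *
        ∑ Q ∈ partitionsOf (X \ Z), w (Q.card + 1) * ∏ B ∈ Q, f B := by
  have hL : ∀ P ∈ partitionsOf X, (P.card : R) * (w P.card * ∏ B ∈ P, f B)
      = ∑ _B ∈ P, w P.card * ∏ B' ∈ P, f B' := by
    intro P _
    rw [sum_const, nsmul_eq_mul]
  have hR : ∀ Z ∈ X.powerset.filter (fun Z => Z ≠ ∅), f Z *
      ∑ Q ∈ partitionsOf (X \ Z), w (Q.card + 1) * ∏ B ∈ Q, f B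
      = ∑ Q ∈ partitionsOf (X \ Z), f Z * (w (Q.card + 1) * ∏ B ∈ Q, f B) :=
    fun Z _ => mul_sum _ _ _
  rw [sum_congr rfl hL, sum_congr rfl hR, sum_sigma', sum_sigma']
  have hins : ∀ p : Σ _ : Finset α, Finset (Finset α),
      p ∈ (X.powerset.filter (fun Z => Z ≠ ∅)).sigma (fun Z => partitionsOf (X \ Z)) →
      insert p.1 p.2 ∈ partitionsOf X ∧ p.1 ∉ p.2 := by
    intro p hp
    rw [mem_sigma, mem_filter, mem_powerset] at hp
    obtain ⟨⟨hZX, hZne⟩, hQ⟩ := hp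
    have hd : ∀ a ∈ p.1, a ∉ X \ p.1 := fun a ha h => (mem_sdiff.1 h).2 ha
    have h := insert_block hZne hd hQ
    rw [union_sdiff_of_subset hZX] at h
    exact ⟨h, not_mem_of_block hZne hd hQ⟩
  refine Finset.sum_bij' (fun p _ => (⟨p.2, p.1.erase p.2⟩ : Σ _ : Finset α, Finset (Finset α)))
    (fun p _ => (⟨insert p.1 p.2, p.1⟩ : Σ _ : Finset (Finset α), Finset α)) ?_ ?_ ?_ ?_ ?_
  · intro p hp
    rw [mem_sigma] at hp
    obtain ⟨hP, hB⟩ := hp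
    rw [mem_sigma, mem_filter, mem_powerset]
    exact ⟨⟨block_subset hP hB, (mem_partitionsOf'.1 hP).1 _ hB⟩, erase_block hP hB⟩
  · intro p hp
    rw [mem_sigma]
    exact ⟨(hins p hp).1, mem_insert_self _ _⟩
  · intro p hp
    rw [mem_sigma] at hp
    dsimp only
    rw [insert_erase hp.2]
  · intro p hp
    have h := hins p hp
    dsimp only
    rw [Finset.erase_insert h.2]
  · intro p hp
    rw [mem_sigma] at hp
    dsimp only
    rw [card_erase_add_one hp.2, ← Finset.mul_prod_erase p.1 f hp.2]
    ring

end Aux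

/-- Lemma 1 of the paper (abstract form): the cumulant of `{y} ∪ X` is expressed through
second-order cumulants `S({y} ∪ Z) − S({y})·S(Z)` over nonempty subsets `Z ⊆ X`. -/
theorem cumulant_insert_eq_sum_second_order {α R : Type*} [DecidableEq α] [CommRing R]
    (y : α) (X : Finset α) (hX : X.Nonempty) (hy : y ∉ X) (S : Finset α → R) :
    cumulant S (insert y X) =
      ∑ Z ∈ X.powerset.filter (fun Z => Z ≠ ∅),
        (S (insert y Z) - S {y} * S Z) *
          ∑ Q ∈ partitionsOf (X \ Z),
            (-1 : R) ^ Q.card * (Nat.factorial Q.card : R) * ∏ B ∈ Q, S B := by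
  have e1 := sum_partitions_insert y X hy
    (fun n => (-1 : R) ^ (n - 1) * (Nat.factorial (n - 1) : R)) S
  simp only [Nat.add_sub_cancel] at e1
  have hterm : ∀ P ∈ partitionsOf X, ((P.card : R)) *
      ((-1 : R) ^ (P.card - 1) * (Nat.factorial (P.card - 1) : R) * ∏ B ∈ P, S B)
      = -((-1 : R) ^ P.card * (Nat.factorial P.card : R) * ∏ B ∈ P, S B) := by
    intro P hP
    have hne : P.card ≠ 0 := by
      intro h0
      rw [Finset.card_eq_zero] at h0
      subst h0
      have h3 := (mem_partitionsOf'.1 hP).2.2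
      simp only [Finset.sup_empty, Finset.bot_eq_empty] at h3
      exact hX.ne_empty h3.symm
    obtain ⟨m, hm⟩ := Nat.exists_eq_succ_of_ne_zero hne
    rw [hm]
    simp only [Nat.succ_sub_one, Nat.factorial_succ, pow_succ]
    push_cast
    ring
  have e2 := sum_partitions_marked X
    (fun n => (-1 : R) ^ (n - 1) * (Nat.factorial (n - 1) : R)) S
  simp only [Nat.add_sub_cancel] at e2
  have e2' : ∑ Z ∈ X.powerset.filter (fun Z => Z ≠ ∅),
      S Z * ∑ Q ∈ partitionsOf (X \ Z),
        (-1 : R) ^ Q.card * (Nat.factorial Q.card : R) * ∏ B ∈ Q, S B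
      = - ∑ P ∈ partitionsOf X,
          (-1 : R) ^ P.card * (Nat.factorial P.card : R) * ∏ B ∈ P, S B := by
    rw [← e2, ← neg_eq_iff_eq_neg, ← Finset.sum_neg_distrib]
    exact sum_congr rfl fun P hP => by rw [hterm P hP, neg_neg]
  unfold cumulant
  rw [e1, ← Finset.add_sum_erase _ _ (empty_mem_powerset X), ← filter_ne' X.powerset ∅]
  simp only [sub_mul, Finset.sum_sub_distrib]
  have hmain : S (insert y ∅) * ∑ Q ∈ partitionsOf (X \ ∅),
      (-1 : R) ^ Q.card * (Nat.factorial Q.card : R) * ∏ B ∈ Q, S B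
      = - ∑ Z ∈ X.powerset.filter (fun Z => Z ≠ ∅),
          S {y} * S Z * ∑ Q ∈ partitionsOf (X \ Z),
            (-1 : R) ^ Q.card * (Nat.factorial Q.card : R) * ∏ B ∈ Q, S B := by
    rw [insert_empty_eq, sdiff_empty]
    have hassoc : ∀ Z ∈ X.powerset.filter (fun Z => Z ≠ ∅),
        S {y} * S Z * ∑ Q ∈ partitionsOf (X \ Z),
          (-1 : R) ^ Q.card * (Nat.factorial Q.card : R) * ∏ B ∈ Q, S B
        = S {y} * (S Z * ∑ Q ∈ partitionsOf (X \ Z),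
            (-1 : R) ^ Q.card * (Nat.factorial Q.card : R) * ∏ B ∈ Q, S B) :=
      fun Z _ => mul_assoc _ _ _
    rw [sum_congr rfl hassoc, ← mul_sum, e2']
    ring
  rw [hmain]
  ring
end

section
/- Let β′, β″ > 0 with β = β′ + β″, let C, C₁, C₂ > 0 and t ≥ 0 be real numbers, set C̃₁ = max(C₁, 1) and C̃₂ = max(C₂, 2/β′), and let s be a natural number. Then Σ_{n=0}^{s} (2^n / n!) · C^{s−n} · ∫_{ℝ^s} ( C + (C₁ + C₂ t)·s + t·Σ_{i=1}^{s} p_i² )^n · exp( −β Σ_{i=1}^{s} p_i²/2 ) dp₁…dp_s ≤ e^C · e^s · (2π/β″)^{s/2} · C^s · Σ_{n=0}^{s} (2/C)^n · (C̃₁ + C̃₂ t)^n. -/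
open MeasureTheory

/-- `x^m e^{-cx} ≤ m!/c^m` for `x ≥ 0`, `c > 0`. -/
private lemma aux_pow_mul_exp {c x : ℝ} (hc : 0 < c) (hx : 0 ≤ x) (m : ℕ) :
    x ^ m * Real.exp (-(c * x)) ≤ (Nat.factorial m : ℝ) / c ^ m := by
  have hm : (0:ℝ) < (Nat.factorial m : ℝ) := by exact_mod_cast Nat.factorial_pos m
  have h := Real.pow_div_factorial_le_exp (c * x) (mul_nonneg hc.le hx) m
  have h2 : (c * x) ^ m ≤ (Nat.factorial m : ℝ) * Real.exp (c * x) := by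
    rw [div_le_iff₀ hm] at h; linarith
  have hcm : (0:ℝ) < c ^ m := pow_pos hc m
  have hE : (0:ℝ) < Real.exp (-(c * x)) := Real.exp_pos _
  rw [le_div_iff₀ hcm]
  calc x ^ m * Real.exp (-(c * x)) * c ^ m
      = (c * x) ^ m * Real.exp (-(c * x)) := by rw [mul_pow]; ring
    _ ≤ (Nat.factorial m : ℝ) * Real.exp (c * x) * Real.exp (-(c * x)) :=
        mul_le_mul_of_nonneg_right h2 hE.le
    _ = (Nat.factorial m : ℝ) := by
        rw [mul_assoc, ← Real.exp_add, add_neg_cancel, Real.exp_zero, mul_one]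

/-- Pointwise bound: `(A + tx)^n e^{-β'x/2} ≤ Σ_k C(n,k) A^k (2t/β')^{n-k} (n-k)!`. -/
private lemma aux_pointwise (n : ℕ) {A t β' x : ℝ} (hA : 0 ≤ A) (ht : 0 ≤ t)
    (hβ' : 0 < β') (hx : 0 ≤ x) :
    (A + t * x) ^ n * Real.exp (-(β' / 2 * x)) ≤
      ∑ k ∈ Finset.range (n + 1),
        (n.choose k : ℝ) * A ^ k * (2 * t / β') ^ (n - k) * ((n - k).factorial : ℝ) := by
  rw [add_pow, Finset.sum_mul]
  refine Finset.sum_le_sum fun k _ => ?_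
  have hb2 : 0 < β' / 2 := by linarith
  have h1 := aux_pow_mul_exp hb2 hx (n - k)
  have hEeq : (2 * t / β') ^ (n - k) = t ^ (n - k) / (β' / 2) ^ (n - k) := by
    rw [← div_pow]
    congr 1
    field_simp
  calc A ^ k * (t * x) ^ (n - k) * (n.choose k : ℝ) * Real.exp (-(β' / 2 * x))
      = ((n.choose k : ℝ) * A ^ k * t ^ (n - k)) * (x ^ (n - k) * Real.exp (-(β' / 2 * x))) := by
        rw [mul_pow]; ring
    _ ≤ ((n.choose k : ℝ) * A ^ k * t ^ (n - k)) *
          (((n - k).factorial : ℝ) / (β' / 2) ^ (n - k)) :=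
        mul_le_mul_of_nonneg_left h1 (by positivity)
    _ = (n.choose k : ℝ) * A ^ k * (2 * t / β') ^ (n - k) * ((n - k).factorial : ℝ) := by
        rw [hEeq]; ring

/-- The analytic heart of the proof of Proposition 1 of the paper (passage from (3.4) to
(3.13)): with `C̃₁ = max(C₁,1)`, `C̃₂ = max(C₂, 2/β′)` and `β = β′ + β″`,
`Σ_{n=0}^{s} (2^n/n!) C^{s−n} ∫_{ℝ^s} (C + (C₁+C₂t)s + tΣp_i²)^n e^{−βΣp_i²/2} dp
  ≤ e^C e^s (2π/β″)^{s/2} C^s Σ_{n=0}^{s} (2/C)^n (C̃₁+C̃₂t)^n`. -/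
theorem interaction_region_momentum_estimate (β β' β'' C C₁ C₂ t : ℝ)
    (hβ' : 0 < β') (hβ'' : 0 < β'') (hβ : β = β' + β'')
    (hC : 0 < C) (hC₁ : 0 < C₁) (hC₂ : 0 < C₂) (ht : 0 ≤ t) (s : ℕ) :
    ∑ n ∈ Finset.range (s + 1),
        ((2 : ℝ) ^ n / (Nat.factorial n : ℝ)) * C ^ (s - n) *
          ∫ p : Fin s → ℝ,
            (C + (C₁ + C₂ * t) * (s : ℝ) + t * ∑ i, p i ^ 2) ^ n *
              Real.exp (-β * ∑ i, p i ^ 2 / 2) ≤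
      Real.exp C * Real.exp (s : ℝ) * (2 * Real.pi / β'') ^ ((s : ℝ) / 2) * C ^ s *
        ∑ n ∈ Finset.range (s + 1),
          (2 / C) ^ n * (max C₁ 1 + max C₂ (2 / β') * t) ^ n := by
  have hπ := Real.pi_pos
  have hs0 : (0:ℝ) ≤ (s:ℝ) := Nat.cast_nonneg s
  set D : ℝ := max C₁ 1 + max C₂ (2 / β') * t with hDdef
  set A : ℝ := C + (C₁ + C₂ * t) * (s : ℝ) with hAdef
  have hm2 : (0:ℝ) < max C₂ (2 / β') :=
    lt_of_lt_of_le (div_pos two_pos hβ') (le_max_right _ _)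
  have hD1 : 1 ≤ D := by
    have h1 : (0:ℝ) ≤ max C₂ (2 / β') * t := mul_nonneg hm2.le ht
    have h2 : (1:ℝ) ≤ max C₁ 1 := le_max_right _ _
    rw [hDdef]; linarith
  have hD0 : (0:ℝ) < D := lt_of_lt_of_le one_pos hD1
  have hE0 : (0:ℝ) ≤ 2 * t / β' := div_nonneg (by linarith) hβ'.le
  have hED : 2 * t / β' ≤ D := by
    have h1 : 2 * t / β' = (2 / β') * t := by ring
    have h2 : (2 / β') * t ≤ max C₂ (2 / β') * t :=
      mul_le_mul_of_nonneg_right (le_max_right _ _) ht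
    have h3 : (0:ℝ) ≤ max C₁ 1 := le_trans zero_le_one (le_max_right _ _)
    rw [hDdef]; linarith
  have hB0 : (0:ℝ) ≤ C₁ + C₂ * t := by nlinarith [mul_nonneg hC₂.le ht]
  have hA0 : (0:ℝ) ≤ A := by
    have := mul_nonneg hB0 hs0
    rw [hAdef]; linarith
  have hBD : C₁ + C₂ * t ≤ D := by
    have h1 : C₁ ≤ max C₁ 1 := le_max_left _ _
    have h2 : C₂ * t ≤ max C₂ (2 / β') * t :=
      mul_le_mul_of_nonneg_right (le_max_left _ _) ht
    rw [hDdef]; linarith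
  have hAD : A ≤ D * (C + (s:ℝ)) := by
    rw [hAdef]
    nlinarith [mul_le_mul_of_nonneg_right hBD hs0,
      mul_nonneg (sub_nonneg.mpr hD1) hC.le]
  have hSnn : ∀ p : Fin s → ℝ, (0:ℝ) ≤ ∑ i, p i ^ 2 :=
    fun p => Finset.sum_nonneg fun i _ => sq_nonneg _
  -- Gaussian facts
  have hb2'' : 0 < β'' / 2 := by linarith
  have hGint : Integrable (fun p : Fin s → ℝ => ∏ i, Real.exp (-(β'' / 2) * p i ^ 2)) :=
    Integrable.fintype_prod fun _ => integrable_exp_neg_mul_sq hb2''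
  have h2πβ : (0:ℝ) < 2 * Real.pi / β'' := div_pos (by linarith) hβ''
  have hGval : (∫ p : Fin s → ℝ, ∏ i, Real.exp (-(β'' / 2) * p i ^ 2))
      = (2 * Real.pi / β'') ^ ((s:ℝ) / 2) := by
    rw [volume_pi, integral_fintype_prod_eq_pow (fun x : ℝ => Real.exp (-(β'' / 2) * x ^ 2)),
      integral_gaussian, Fintype.card_fin]
    have h1 : Real.pi / (β'' / 2) = 2 * Real.pi / β'' := by
      field_simp
    rw [h1, Real.sqrt_eq_rpow,
      ← Real.rpow_natCast ((2 * Real.pi / β'') ^ ((1:ℝ) / 2)) s,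
      ← Real.rpow_mul h2πβ.le]
    congr 1
    ring
  have hG0 : (0:ℝ) ≤ (2 * Real.pi / β'') ^ ((s:ℝ) / 2) := Real.rpow_nonneg h2πβ.le _
  -- integral bound for each n
  have hIB : ∀ n : ℕ,
      (∫ p : Fin s → ℝ, (A + t * ∑ i, p i ^ 2) ^ n * Real.exp (-β * ∑ i, p i ^ 2 / 2)) ≤
        (∑ k ∈ Finset.range (n + 1),
            (n.choose k : ℝ) * A ^ k * (2 * t / β') ^ (n - k) * ((n - k).factorial : ℝ)) *
          (2 * Real.pi / β'') ^ ((s:ℝ) / 2) := by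
    intro n
    rw [← hGval, ← integral_const_mul]
    apply integral_mono_of_nonneg
    · exact Filter.Eventually.of_forall fun p =>
        mul_nonneg (pow_nonneg (add_nonneg hA0 (mul_nonneg ht (hSnn p))) n) (Real.exp_nonneg _)
    · exact hGint.const_mul _
    · refine Filter.Eventually.of_forall fun p => ?_
      show (A + t * ∑ i, p i ^ 2) ^ n * Real.exp (-β * ∑ i, p i ^ 2 / 2) ≤
        (∑ k ∈ Finset.range (n + 1),
            (n.choose k : ℝ) * A ^ k * (2 * t / β') ^ (n - k) * ((n - k).factorial : ℝ)) *
          ∏ i, Real.exp (-(β'' / 2) * p i ^ 2)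
      have hx : (0:ℝ) ≤ ∑ i, p i ^ 2 := hSnn p
      have hsplit : Real.exp (-β * ∑ i, p i ^ 2 / 2)
          = Real.exp (-(β' / 2 * ∑ i, p i ^ 2)) * ∏ i, Real.exp (-(β'' / 2) * p i ^ 2) := by
        rw [← Real.exp_sum, ← Real.exp_add]
        congr 1
        have h1 : ∑ i, (-(β'' / 2) * p i ^ 2) = -(β'' / 2) * ∑ i, p i ^ 2 :=
          (Finset.mul_sum _ _ _).symm
        rw [h1, ← Finset.sum_div, hβ]
        ring
      rw [hsplit, ← mul_assoc]
      exact mul_le_mul_of_nonneg_right (aux_pointwise n hA0 ht hβ' hx)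
        (Finset.prod_nonneg fun i _ => Real.exp_nonneg _)
  -- termwise bound
  have hterm : ∀ n ∈ Finset.range (s + 1),
      ((2:ℝ) ^ n / (Nat.factorial n : ℝ)) * C ^ (s - n) *
          (∫ p : Fin s → ℝ, (A + t * ∑ i, p i ^ 2) ^ n * Real.exp (-β * ∑ i, p i ^ 2 / 2)) ≤
        Real.exp C * Real.exp (s:ℝ) * (2 * Real.pi / β'') ^ ((s:ℝ) / 2) * C ^ s *
          ((2 / C) ^ n * D ^ n) := by
    intro n hn
    have hns : n ≤ s := Nat.lt_succ_iff.mp (Finset.mem_range.mp hn)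
    have hfac : (0:ℝ) < (Nat.factorial n : ℝ) := by exact_mod_cast Nat.factorial_pos n
    have hK : (∑ k ∈ Finset.range (n + 1),
          (n.choose k : ℝ) * A ^ k * (2 * t / β') ^ (n - k) * ((n - k).factorial : ℝ))
        = (Nat.factorial n : ℝ) *
            ∑ k ∈ Finset.range (n + 1), A ^ k / (Nat.factorial k : ℝ) * (2 * t / β') ^ (n - k) := by
      rw [Finset.mul_sum]
      refine Finset.sum_congr rfl fun k hk => ?_
      have hkn : k ≤ n := Nat.lt_succ_iff.mp (Finset.mem_range.mp hk)
      have hcf' : (n.choose k : ℝ) * (Nat.factorial k : ℝ) * (Nat.factorial (n - k) : ℝ)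
          = (Nat.factorial n : ℝ) := by
        exact_mod_cast congrArg (Nat.cast : ℕ → ℝ) (Nat.choose_mul_factorial_mul_factorial hkn)
      have hkf : (Nat.factorial k : ℝ) ≠ 0 := by
        exact_mod_cast (Nat.factorial_pos k).ne'
      generalize (2 * t / β') ^ (n - k) = E₀
      field_simp
      linear_combination (A ^ k * E₀) * hcf'
    have hCs0 : (0:ℝ) ≤ C + (s:ℝ) := add_nonneg hC.le hs0
    have hSn : (∑ k ∈ Finset.range (n + 1),
          A ^ k / (Nat.factorial k : ℝ) * (2 * t / β') ^ (n - k))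
        ≤ D ^ n * Real.exp (C + (s:ℝ)) := by
      calc ∑ k ∈ Finset.range (n + 1), A ^ k / (Nat.factorial k : ℝ) * (2 * t / β') ^ (n - k)
          ≤ ∑ k ∈ Finset.range (n + 1),
              D ^ n * ((C + (s:ℝ)) ^ k / (Nat.factorial k : ℝ)) := by
            refine Finset.sum_le_sum fun k hk => ?_
            have hkn : k ≤ n := Nat.lt_succ_iff.mp (Finset.mem_range.mp hk)
            have hkf : (0:ℝ) < (Nat.factorial k : ℝ) := by exact_mod_cast Nat.factorial_pos k
            have h1 : A ^ k ≤ (D * (C + (s:ℝ))) ^ k := pow_le_pow_left₀ hA0 hAD k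
            have h2 : (2 * t / β') ^ (n - k) ≤ D ^ (n - k) := pow_le_pow_left₀ hE0 hED _
            have hDD : D ^ k * D ^ (n - k) = D ^ n := by
              rw [← pow_add, Nat.add_sub_cancel' hkn]
            calc A ^ k / (Nat.factorial k : ℝ) * (2 * t / β') ^ (n - k)
                ≤ (D * (C + (s:ℝ))) ^ k / (Nat.factorial k : ℝ) * D ^ (n - k) := by
                  apply mul_le_mul (div_le_div_of_nonneg_right h1 hkf.le) h2
                    (pow_nonneg hE0 _) (by positivity)
              _ = D ^ n * ((C + (s:ℝ)) ^ k / (Nat.factorial k : ℝ)) := by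
                  rw [mul_pow]
                  field_simp
                  linear_combination hDD
        _ = D ^ n * ∑ k ∈ Finset.range (n + 1), (C + (s:ℝ)) ^ k / (Nat.factorial k : ℝ) :=
            (Finset.mul_sum _ _ _).symm
        _ ≤ D ^ n * Real.exp (C + (s:ℝ)) :=
            mul_le_mul_of_nonneg_left (Real.sum_le_exp_of_nonneg hCs0 (n + 1))
              (pow_nonneg hD0.le n)
    have hpre : (0:ℝ) ≤ (2:ℝ) ^ n / (Nat.factorial n : ℝ) * C ^ (s - n) :=
      mul_nonneg (div_nonneg (by positivity) hfac.le) (pow_nonneg hC.le _)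
    calc ((2:ℝ) ^ n / (Nat.factorial n : ℝ)) * C ^ (s - n) *
            (∫ p : Fin s → ℝ, (A + t * ∑ i, p i ^ 2) ^ n * Real.exp (-β * ∑ i, p i ^ 2 / 2))
        ≤ ((2:ℝ) ^ n / (Nat.factorial n : ℝ)) * C ^ (s - n) *
            ((∑ k ∈ Finset.range (n + 1),
                (n.choose k : ℝ) * A ^ k * (2 * t / β') ^ (n - k) * ((n - k).factorial : ℝ)) *
              (2 * Real.pi / β'') ^ ((s:ℝ) / 2)) := mul_le_mul_of_nonneg_left (hIB n) hpre
      _ = (2:ℝ) ^ n * C ^ (s - n) * (2 * Real.pi / β'') ^ ((s:ℝ) / 2) *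
            (∑ k ∈ Finset.range (n + 1),
              A ^ k / (Nat.factorial k : ℝ) * (2 * t / β') ^ (n - k)) := by
          rw [hK, div_mul_eq_mul_div, div_mul_eq_mul_div, div_eq_iff hfac.ne']
          ring
      _ ≤ (2:ℝ) ^ n * C ^ (s - n) * (2 * Real.pi / β'') ^ ((s:ℝ) / 2) *
            (D ^ n * Real.exp (C + (s:ℝ))) := by
          apply mul_le_mul_of_nonneg_left hSn
          exact mul_nonneg (mul_nonneg (by positivity) (pow_nonneg hC.le _)) hG0
      _ = Real.exp C * Real.exp (s:ℝ) * (2 * Real.pi / β'') ^ ((s:ℝ) / 2) * C ^ s *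
            ((2 / C) ^ n * D ^ n) := by
          have hCs : C ^ s = C ^ (s - n) * C ^ n := by
            rw [← pow_add, Nat.sub_add_cancel hns]
          have hcc : (C ^ (s - n) * C ^ n) * ((2:ℝ) ^ n / C ^ n * D ^ n)
              = C ^ (s - n) * 2 ^ n * D ^ n := by
            field_simp
          rw [← Real.exp_add, hCs, div_pow]
          linear_combination (-(Real.exp (C + (s:ℝ)) *
            (2 * Real.pi / β'') ^ ((s:ℝ) / 2))) * hcc
  calc ∑ n ∈ Finset.range (s + 1),
        ((2:ℝ) ^ n / (Nat.factorial n : ℝ)) * C ^ (s - n) *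
          (∫ p : Fin s → ℝ, (A + t * ∑ i, p i ^ 2) ^ n * Real.exp (-β * ∑ i, p i ^ 2 / 2))
      ≤ ∑ n ∈ Finset.range (s + 1),
          Real.exp C * Real.exp (s:ℝ) * (2 * Real.pi / β'') ^ ((s:ℝ) / 2) * C ^ s *
            ((2 / C) ^ n * D ^ n) := Finset.sum_le_sum hterm
    _ = Real.exp C * Real.exp (s:ℝ) * (2 * Real.pi / β'') ^ ((s:ℝ) / 2) * C ^ s *
          ∑ n ∈ Finset.range (s + 1), (2 / C) ^ n * D ^ n := (Finset.mul_sum _ _ _).symm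
end
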